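/- Let U be an open subset of ℂⁿ and let g₁, …, gₙ be functions holomorphic on U. Let a = (a_{ℓk})_{1≤ℓ,k≤n} be the matrix of functions a_{ℓk} = ∂_k g_ℓ (so each row of a is the holomorphic gradient of one of the gⱼ). Define b_ν = Σ_{p,ℓ=1}^{n} adj(a)_{pℓ} · ∂_p a_{ℓν} for 1 ≤ ν ≤ n. Then b_ν = ∂_ν(det a) on U for every ν; that is, when every row of the matrix is the differential of a holomorphic function, the vector produced by the new procedure of Theorem (6.2) coincides exactly with the gradient of the determinant produced by the old procedure. -/

import Mathlib

open scoped BigOperators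

/-- **§6.3 / Theorem (6.2) of the paper, gradient-rows case.**
If every row of the matrix `a` is the holomorphic gradient of a holomorphic function
(`a_{ℓk} = ∂_k g_ℓ`) on an open `U ⊆ ℂⁿ`, then the vector
`b_ν = Σ_{p,ℓ} adj(a)_{pℓ} ∂_p a_{ℓν}` produced by the new procedure coincides with
`∂_ν (det a)`, the gradient of the determinant produced by the old procedure. -/
theorem new_procedure_eq_gradient_det_of_rows_gradients
    (n : ℕ) (U : Set (Fin n → ℂ)) (hU : IsOpen U)
    (g : Fin n → (Fin n → ℂ) → ℂ)
    (hg : ∀ ℓ, AnalyticOnNhd ℂ (g ℓ) U)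
    (a : Fin n → Fin n → (Fin n → ℂ) → ℂ)
    (ha : ∀ ℓ k, a ℓ k = fun w => fderiv ℂ (g ℓ) w (Pi.single k 1))
    (z : Fin n → ℂ) (hz : z ∈ U) (ν : Fin n) :
    ∑ p : Fin n, ∑ ℓ : Fin n,
        (Matrix.adjugate (Matrix.of fun j k => a j k z)) p ℓ *
          fderiv ℂ (a ℓ ν) z (Pi.single p 1) =
      fderiv ℂ (fun w => (Matrix.of fun j k => a j k w).det) z (Pi.single ν 1) := by
  classical
  have hga : ∀ ℓ, AnalyticAt ℂ (g ℓ) z := fun ℓ => hg ℓ z hz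
  have hdf : ∀ ℓ, DifferentiableAt ℂ (fderiv ℂ (g ℓ)) z :=
    fun ℓ => ((hga ℓ).fderiv).differentiableAt
  have hcomp : ∀ ℓ k, a ℓ k =
      (ContinuousLinearMap.apply ℂ ℂ (Pi.single k 1 : Fin n → ℂ)) ∘ (fderiv ℂ (g ℓ)) := by
    intro ℓ k; rw [ha]; rfl
  have hda : ∀ ℓ k, DifferentiableAt ℂ (a ℓ k) z := by
    intro ℓ k
    rw [hcomp ℓ k]
    exact ((ContinuousLinearMap.apply ℂ ℂ
      (Pi.single k 1 : Fin n → ℂ)).differentiableAt).comp z (hdf ℓ)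
  have hfda : ∀ ℓ k u, fderiv ℂ (a ℓ k) z u
      = fderiv ℂ (fderiv ℂ (g ℓ)) z u (Pi.single k 1) := by
    intro ℓ k u
    rw [hcomp ℓ k, fderiv_comp z (ContinuousLinearMap.differentiableAt _) (hdf ℓ),
      ContinuousLinearMap.fderiv]
    rfl
  -- symmetry of the second derivative
  have hsym : ∀ ℓ p, fderiv ℂ (a ℓ ν) z (Pi.single p 1)
      = fderiv ℂ (a ℓ p) z (Pi.single ν 1) := by
    intro ℓ p
    rw [hfda, hfda]
    exact ((hga ℓ).contDiffAt (n := 2)).isSymmSndFDerivAt minSmoothness_of_isRCLikeNormedField.le _ _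
  set M : Matrix (Fin n) (Fin n) ℂ := Matrix.of fun j k => a j k z with hM
  set c : Fin n → Fin n → ℂ := fun ℓ k => fderiv ℂ (a ℓ k) z (Pi.single ν 1) with hc
  -- derivative of the determinant
  have hF : (fun w => (Matrix.of fun j k => a j k w).det)
      = fun w => ∑ σ : Equiv.Perm (Fin n),
          ((Equiv.Perm.sign σ : ℤ) : ℂ) * ∏ i, a (σ i) i w := by
    funext w; exact Matrix.det_apply' _
  have hdet : HasFDerivAt (fun w => (Matrix.of fun j k => a j k w).det)
      (∑ σ : Equiv.Perm (Fin n), ((Equiv.Perm.sign σ : ℤ) : ℂ) •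
        (∑ i, (∏ j ∈ Finset.univ.erase i, a (σ j) j z) • fderiv ℂ (a (σ i) i) z)) z := by
    rw [hF]
    exact HasFDerivAt.fun_sum fun σ _ =>
      (HasFDerivAt.finset_prod fun i _ => (hda (σ i) i).hasFDerivAt).const_mul _
  rw [hdet.fderiv]
  simp only [ContinuousLinearMap.sum_apply, ContinuousLinearMap.smul_apply, smul_eq_mul]
  -- rewrite LHS using symmetry
  have hL : ∀ p ℓ, (Matrix.adjugate M) p ℓ * fderiv ℂ (a ℓ ν) z (Pi.single p 1)
      = (Matrix.adjugate M) p ℓ * c ℓ p := by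
    intro p ℓ; rw [hsym]
  calc ∑ p, ∑ ℓ, (Matrix.adjugate M) p ℓ * fderiv ℂ (a ℓ ν) z (Pi.single p 1)
      = ∑ p, ∑ ℓ, (Matrix.adjugate M) p ℓ * c ℓ p := by
        refine Finset.sum_congr rfl fun p _ => Finset.sum_congr rfl fun ℓ _ => hL p ℓ
    _ = ∑ p, (M.updateCol p (fun ℓ => c ℓ p)).det := by
        refine Finset.sum_congr rfl fun p _ => ?_
        rw [← Matrix.cramer_apply, Matrix.cramer_eq_adjugate_mulVec]
        simp [Matrix.mulVec, dotProduct]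
    _ = ∑ p, ∑ σ : Equiv.Perm (Fin n), ((Equiv.Perm.sign σ : ℤ) : ℂ) *
          (c (σ p) p * ∏ j ∈ Finset.univ.erase p, M (σ j) j) := by
        refine Finset.sum_congr rfl fun p _ => ?_
        rw [Matrix.det_apply']
        refine Finset.sum_congr rfl fun σ _ => ?_
        congr 1
        rw [← Finset.mul_prod_erase Finset.univ _ (Finset.mem_univ p)]
        congr 1
        · exact Matrix.updateCol_self
        · refine Finset.prod_congr rfl fun j hj => ?_
          rw [Matrix.updateCol_apply, if_neg (Finset.ne_of_mem_erase hj)]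
    _ = ∑ σ : Equiv.Perm (Fin n), ((Equiv.Perm.sign σ : ℤ) : ℂ) *
          ∑ i, (∏ j ∈ Finset.univ.erase i, a (σ j) j z) *
            fderiv ℂ (a (σ i) i) z (Pi.single ν 1) := by
        rw [Finset.sum_comm]
        refine Finset.sum_congr rfl fun σ _ => ?_
        rw [Finset.mul_sum]
        refine Finset.sum_congr rfl fun i _ => ?_
        rw [hc]
        ring_nf
        rfl
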